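/- Let R > 0, m_1, m_2 > 0, let α ∈ (0, R) be a real number, and let c ∈ ℂ with |c| < R and c ≠ α. If the pair of points (c_1, c_2) = (α, c) satisfies the elliptic relative-equilibrium equations with n = 2, then c is a negative real number, and writing r = −c ∈ (0, R) one has m_1 α (R² + α²)(R² − r²)² = m_2 r (R² + r²)(R² − α²)². -/

import Mathlib

open Complex ComplexConjugate Finset

/-- The quantity `Θ_{2,(k,j)}` appearing in the denominators of the equations of
motion of the curved `n`-body problem in the Poincaré disk of radius `R`. -/
noncomputable def diskTheta (R : ℝ) (z w : ℂ) : ℝ :=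
  ((2 * (z * conj w + w * conj z) * (R : ℂ) ^ 2
      - ((((‖z‖) ^ 2 + R ^ 2) * ((‖w‖) ^ 2 + R ^ 2) : ℝ) : ℂ)) ^ 2
    - (((R ^ 2 - (‖z‖) ^ 2) ^ 2 * (R ^ 2 - (‖w‖) ^ 2) ^ 2 : ℝ) : ℂ)).re

/-- The points `c k` satisfy the elliptic relative-equilibrium equations in the
Poincaré disk of radius `R` with masses `m`. -/
def EllipticRelEq (R : ℝ) {n : ℕ} (m : Fin n → ℝ) (c : Fin n → ℂ) : Prop :=
  ∀ k : Fin n,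
    (R : ℂ) ^ 3 * (((R ^ 2 + (‖c k‖) ^ 2 : ℝ)) : ℂ) * c k
        / (((4 * (R ^ 2 - (‖c k‖) ^ 2) ^ 4 : ℝ)) : ℂ)
      = -∑ j ∈ Finset.univ.erase k,
          (m j : ℂ) * ((((‖c j‖) ^ 2 - R ^ 2) ^ 2 : ℝ) : ℂ)
            * (c j - c k) * ((R : ℂ) ^ 2 - c k * conj (c j))
            / (((diskTheta R (c k) (c j)) ^ ((3 : ℝ) / 2) : ℝ) : ℂ)

lemma diskTheta_symm (R : ℝ) (z w : ℂ) : diskTheta R z w = diskTheta R w z := by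
  unfold diskTheta
  congr 2 <;> push_cast <;> ring

lemma rpow_three_halves_nonpos {x : ℝ} (hx : x ≤ 0) : x ^ ((3:ℝ)/2) = 0 := by
  rcases eq_or_lt_of_le hx with h | h
  · rw [h, Real.zero_rpow (by norm_num)]
  · rw [Real.rpow_def_of_neg h]
    have h2 : (3:ℝ)/2 * Real.pi = Real.pi + Real.pi/2 := by ring
    rw [h2, Real.cos_add]
    simp

lemma sq_lt_sq_of' {a R : ℝ} (ha : 0 ≤ a) (h : a < R) : a ^ 2 < R ^ 2 := by nlinarith

lemma pos_of_mul_eq' {P S Q : ℝ} (hP : 0 < P) (hQ : 0 < Q) (h : P * S = Q) : 0 < S := by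
  by_contra hns
  push_neg at hns
  nlinarith [mul_nonpos_of_nonneg_of_nonpos hP.le hns]

lemma neg_lt_of_sq_lt {x R : ℝ} (hR : 0 < R) (h : x ^ 2 < R ^ 2) : -x < R := by
  nlinarith [sq_nonneg (x + R)]

set_option maxHeartbeats 1000000 in
/-- In an elliptic relative equilibrium of the curved 2-body problem in the Poincaré
disk with the first body on the positive real axis at `α`, the second body is a
negative real number `−r` with `m₁ α (R² + α²)(R² − r²)² = m₂ r (R² + r²)(R² − α²)²`. -/
theorem ellipticRelEq_two_bodies (R m₁ m₂ α : ℝ) (hR : 0 < R) (hm₁ : 0 < m₁) (hm₂ : 0 < m₂)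
    (hα : α ∈ Set.Ioo 0 R) (c : ℂ) (hc : ‖c‖ < R) (hne : c ≠ (α : ℂ))
    (h : EllipticRelEq R ![m₁, m₂] ![(α : ℂ), c]) :
    ∃ r : ℝ, 0 < r ∧ r < R ∧ c = -(r : ℂ) ∧
      m₁ * α * (R ^ 2 + α ^ 2) * (R ^ 2 - r ^ 2) ^ 2
        = m₂ * r * (R ^ 2 + r ^ 2) * (R ^ 2 - α ^ 2) ^ 2 := by
  obtain ⟨hα0, hαR⟩ := hα
  have h0 := h 0
  have h1 := h 1
  simp only [show (Finset.univ.erase (0:Fin 2)) = {1} from by decide,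
    show (Finset.univ.erase (1:Fin 2)) = {0} from by decide, Finset.sum_singleton,
    Matrix.cons_val_zero, Matrix.cons_val_one, Matrix.head_cons,
    Complex.norm_real, Real.norm_eq_abs, abs_of_pos hα0, Complex.conj_ofReal,
    diskTheta_symm R c (α:ℂ)] at h0 h1
  set T : ℝ := diskTheta R (α:ℂ) c with hT
  set t : ℝ := T ^ ((3:ℝ)/2) with ht
  have hRα : (0:ℝ) < R ^ 2 - α ^ 2 := sub_pos.mpr (sq_lt_sq_of' hα0.le hαR)
  have hd0 : (4 * (R ^ 2 - α ^ 2) ^ 4 : ℝ) ≠ 0 := by positivity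
  have hd0c : ((4 * (R ^ 2 - α ^ 2) ^ 4 : ℝ) : ℂ) ≠ 0 := by exact_mod_cast hd0
  have habs : (0:ℝ) ≤ ‖c‖ := norm_nonneg c
  have hc2 : ‖c‖ ^ 2 < R ^ 2 := sq_lt_sq_of' habs hc
  have hTpos : 0 < T := by
    by_contra hle
    push_neg at hle
    have ht0 : t = 0 := rpow_three_halves_nonpos hle
    rw [ht0] at h0
    simp only [Complex.ofReal_zero, div_zero, neg_zero] at h0
    rw [div_eq_zero_iff] at h0
    rcases h0 with h0 | h0
    · have hz1 : (R:ℂ) ≠ 0 := by exact_mod_cast hR.ne'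
      have hz2 : ((R ^ 2 + α ^ 2 : ℝ):ℂ) ≠ 0 := by
        norm_cast; positivity
      have hz3 : ((α:ℝ):ℂ) ≠ 0 := by exact_mod_cast hα0.ne'
      exact (mul_ne_zero (mul_ne_zero (pow_ne_zero 3 hz1) hz2) hz3) h0
    · exact hd0c h0
  have htpos : 0 < t := Real.rpow_pos_of_pos hTpos _
  have htc : ((t:ℝ):ℂ) ≠ 0 := by exact_mod_cast htpos.ne'
  rw [← neg_div] at h0 h1
  rw [div_eq_div_iff hd0c htc] at h0
  -- imaginary part: c is real
  have him := congrArg Complex.im h0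
  simp only [← Complex.ofReal_pow, Complex.mul_im, Complex.mul_re, Complex.sub_re,
    Complex.sub_im, Complex.neg_re, Complex.neg_im, Complex.conj_re, Complex.conj_im,
    Complex.ofReal_re, Complex.ofReal_im] at him
  have hKpos : (0:ℝ) < (‖c‖ ^ 2 - R ^ 2) ^ 2 := by
    have : ‖c‖ ^ 2 - R ^ 2 ≠ 0 := by
      have h' : ‖c‖ ^ 2 - R ^ 2 < 0 := by linarith
      exact h'.ne
    positivity
  have hco : m₂ * ((‖c‖ ^ 2 - R ^ 2) ^ 2) * (R ^ 2 - α ^ 2)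
      * (4 * (R ^ 2 - α ^ 2) ^ 4) ≠ 0 := by positivity
  have himk : m₂ * ((‖c‖ ^ 2 - R ^ 2) ^ 2) * (R ^ 2 - α ^ 2)
      * (4 * (R ^ 2 - α ^ 2) ^ 4) * c.im = 0 := by linear_combination him
  have hy : c.im = 0 := by
    rcases mul_eq_zero.mp himk with h' | h'
    · exact absurd h' hco
    · exact h'
  clear him himk
  set x : ℝ := c.re with hx
  have hcx : c = (x:ℂ) := Complex.ext rfl (by simp [hy])
  rw [hcx] at h0 h1 hc
  rw [Complex.norm_real, Real.norm_eq_abs] at h0 h1 hc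
  rw [Complex.conj_ofReal] at h0
  have hxsq : |x| ^ 2 = x ^ 2 := _root_.sq_abs x
  rw [hxsq] at h0 h1
  have hx2 : x ^ 2 < R ^ 2 := by
    have h' := sq_lt_sq_of' (abs_nonneg x) hc
    rwa [_root_.sq_abs] at h'
  have hdx : (4 * (R ^ 2 - x ^ 2) ^ 4 : ℝ) ≠ 0 := by
    have : (0:ℝ) < R ^ 2 - x ^ 2 := by linarith
    positivity
  have hdxc : ((4 * (R ^ 2 - x ^ 2) ^ 4 : ℝ) : ℂ) ≠ 0 := by exact_mod_cast hdx
  rw [div_eq_div_iff hdxc htc] at h1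
  -- realify
  have e0 : R ^ 3 * (R ^ 2 + α ^ 2) * α * t
      = -(m₂ * ((x ^ 2 - R ^ 2) ^ 2) * (x - α) * (R ^ 2 - α * x))
        * (4 * (R ^ 2 - α ^ 2) ^ 4) := by
    exact_mod_cast h0
  have e1 : R ^ 3 * (R ^ 2 + x ^ 2) * x * t
      = -(m₁ * ((α ^ 2 - R ^ 2) ^ 2) * (α - x) * (R ^ 2 - x * α))
        * (4 * (R ^ 2 - x ^ 2) ^ 4) := by
    exact_mod_cast h1
  -- sign analysis
  have hxa : x ≠ α := fun hxe => hne (by rw [hcx, hxe])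
  have hRx : (0:ℝ) < R ^ 2 - α * x := by
    have h1' : α * x ≤ α * |x| := mul_le_mul_of_nonneg_left (le_abs_self x) hα0.le
    have h2' : α * |x| < α * R := mul_lt_mul_of_pos_left hc hα0
    have h3' : α * R < R * R := mul_lt_mul_of_pos_right hαR hR
    have h4' : R * R = R ^ 2 := (sq R).symm
    linarith
  have hxr2 : x ^ 2 - R ^ 2 ≠ 0 := by
    have h' : x ^ 2 - R ^ 2 < 0 := by linarith
    exact h'.ne
  have hPm : (0:ℝ) < m₂ * ((x ^ 2 - R ^ 2) ^ 2) * (4 * (R ^ 2 - α ^ 2) ^ 4) := by positivity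
  have hQm : (0:ℝ) < R ^ 3 * (R ^ 2 + α ^ 2) * α * t := by positivity
  have hprod0 : (m₂ * ((x ^ 2 - R ^ 2) ^ 2) * (4 * (R ^ 2 - α ^ 2) ^ 4))
      * ((α - x) * (R ^ 2 - α * x)) = R ^ 3 * (R ^ 2 + α ^ 2) * α * t := by
    linear_combination -e0
  have hSpos : (0:ℝ) < (α - x) * (R ^ 2 - α * x) := pos_of_mul_eq' hPm hQm hprod0
  have hax : (0:ℝ) < α - x :=
    pos_of_mul_eq' hRx hSpos (by ring)
  have hx2R : (0:ℝ) < R ^ 2 - x ^ 2 := by linarith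
  have haR2 : α ^ 2 - R ^ 2 ≠ 0 := by
    have h' : α ^ 2 - R ^ 2 < 0 := by linarith
    exact h'.ne
  have hP1 : (0:ℝ) < R ^ 3 * (R ^ 2 + x ^ 2) * t := by positivity
  have hW : (0:ℝ) < m₁ * ((α ^ 2 - R ^ 2) ^ 2) * (4 * (R ^ 2 - x ^ 2) ^ 4)
      * ((α - x) * (R ^ 2 - α * x)) :=
    mul_pos (by positivity) hSpos
  have hprod1 : (R ^ 3 * (R ^ 2 + x ^ 2) * t) * (-x)
      = m₁ * ((α ^ 2 - R ^ 2) ^ 2) * (4 * (R ^ 2 - x ^ 2) ^ 4)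
        * ((α - x) * (R ^ 2 - α * x)) := by
    linear_combination -e1
  have hxneg' : (0:ℝ) < -x := pos_of_mul_eq' hP1 hW hprod1
  have hxneg : x < 0 := by linarith
  -- final identity
  have hF : (4 * t * ((α - x) * (R ^ 2 - α * x)) * R ^ 3 * (R ^ 2 - α ^ 2) ^ 2
      * (R ^ 2 - x ^ 2) ^ 2 : ℝ) ≠ 0 := by
    have : (0:ℝ) < R ^ 2 - x ^ 2 := by linarith
    positivity
  have key : (4 * t * ((α - x) * (R ^ 2 - α * x)) * R ^ 3 * (R ^ 2 - α ^ 2) ^ 2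
        * (R ^ 2 - x ^ 2) ^ 2)
      * (m₁ * α * (R ^ 2 + α ^ 2) * (R ^ 2 - x ^ 2) ^ 2)
    = (4 * t * ((α - x) * (R ^ 2 - α * x)) * R ^ 3 * (R ^ 2 - α ^ 2) ^ 2
        * (R ^ 2 - x ^ 2) ^ 2)
      * (-(m₂ * x * (R ^ 2 + x ^ 2) * (R ^ 2 - α ^ 2) ^ 2)) := by
    linear_combination (t * R ^ 3 * α * (R ^ 2 + α ^ 2)) * e1
      - (t * R ^ 3 * x * (R ^ 2 + x ^ 2)) * e0
  have hXY := mul_left_cancel₀ hF key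
  refine ⟨-x, by linarith, neg_lt_of_sq_lt hR hx2, ?_, ?_⟩
  · rw [hcx]; push_cast; ring
  · linear_combination hXY
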